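/- Let ξ_i > 0, and suppose continuous functions u_i : [t₀ - r, ∞) → ℝ satisfy, in the Dini derivative sense, D⁺|u_i(t)| ≤ -p_i(t)|u_i(t)| + Σ_j q_{ij}(t) sup_{s ∈ [t-r, t]} |u_j(s)| for t ≥ t₀, where p_i, q_{ij} ≥ 0 are continuous and -ξ_i p_i(t) + Σ_j ξ_j q_{ij}(t) ≤ -η < 0 for all i, t. Then ‖u(t)‖_ξ := max_i ξ_i^{-1}|u_i(t)| satisfies ‖u(t)‖_ξ ≤ max(sup_{s∈[t₀-r,t₀]} ‖u(s)‖_ξ, 0) for all t ≥ t₀, i.e., the weighted sup norm never exceeds its initial history supremum. -/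

import Mathlib

open Filter Finset in
/-- The upper right Dini derivative. -/
noncomputable def diniUpper (f : ℝ → ℝ) (t : ℝ) : ℝ :=
  limsup (fun h => (f (t + h) - f t) / h) (nhdsWithin 0 (Set.Ioi 0))

open Finset in
/-- multidimensional Halanay-type inequality with weighted
diagonal dominance: the weighted sup norm never exceeds (the positive part of)
its initial history supremum. -/
theorem stmt14 (n : ℕ) (t₀ r η H : ℝ) (ξ : Fin n → ℝ)
    (p : Fin n → ℝ → ℝ) (q : Fin n → Fin n → ℝ → ℝ) (u : Fin n → ℝ → ℝ)
    (hr : 0 ≤ r) (hξ : ∀ i, 0 < ξ i)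
    (hp : ∀ i, Continuous (p i)) (hq : ∀ i j, Continuous (q i j))
    (hppos : ∀ i t, 0 ≤ p i t) (hqpos : ∀ i j t, 0 ≤ q i j t)
    (hu : ∀ i, ContinuousOn (u i) (Set.Ici (t₀ - r)))
    (hη : 0 < η)
    (hdom : ∀ i t, -ξ i * p i t + ∑ j, ξ j * q i j t ≤ -η)
    (hdini : ∀ i, ∀ t ≥ t₀, diniUpper (fun s => |u i s|) t ≤
      -p i t * |u i t| +
        ∑ j, q i j t * sSup ((fun s => |u j s|) '' Set.Icc (t - r) t))
    (hH : ∀ s ∈ Set.Icc (t₀ - r) t₀, ∀ i, (ξ i)⁻¹ * |u i s| ≤ H) :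
    ∀ t ≥ t₀, ∀ i, (ξ i)⁻¹ * |u i t| ≤ max H 0 := by
  have main : ∀ ε : ℝ, 0 < ε → ∀ t, t₀ ≤ t → ∀ i,
      (ξ i)⁻¹ * |u i t| ≤ max H 0 + ε := by
    intro ε hε
    by_contra hcon
    push_neg at hcon
    obtain ⟨t₁, ht₁, i₁, hi₁⟩ := hcon
    set M' : ℝ := max H 0 + ε with hM'def
    have hM'pos : 0 < M' := lt_of_lt_of_le hε (le_add_of_nonneg_left (le_max_right H 0))
    set B : Set ℝ := {t | t₀ ≤ t ∧ ∃ i, M' < (ξ i)⁻¹ * |u i t|} with hBdef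
    have hBne : B.Nonempty := ⟨t₁, ht₁, i₁, hi₁⟩
    have hBbdd : BddBelow B := ⟨t₀, fun x hx => hx.1⟩
    set T : ℝ := sInf B with hTdef
    have hTt₀ : t₀ ≤ T := le_csInf hBne fun x hx => hx.1
    have hpre : ∀ s, t₀ ≤ s → s < T → ∀ i, (ξ i)⁻¹ * |u i s| ≤ M' := by
      intro s hs hsT i
      by_contra h
      push_neg at h
      exact absurd (csInf_le hBbdd ⟨hs, i, h⟩) (not_le.mpr hsT)
    have hhist : ∀ s, t₀ - r ≤ s → s ≤ t₀ → ∀ i, (ξ i)⁻¹ * |u i s| ≤ M' := by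
      intro s h1 h2 i
      have h3 := hH s ⟨h1, h2⟩ i
      have h4 : H ≤ max H 0 := le_max_left _ _
      simp only [hM'def]
      linarith
    have hvc : ∀ i, ContinuousOn (fun s => (ξ i)⁻¹ * |u i s|) (Set.Ici (t₀ - r)) :=
      fun i => continuousOn_const.mul (hu i).abs
    have hTmem : T ∈ Set.Ici (t₀ - r) := by
      simp only [Set.mem_Ici]; linarith
    have hatT : ∀ i, (ξ i)⁻¹ * |u i T| ≤ M' := by
      intro i
      rcases eq_or_lt_of_le hTt₀ with h | h
      · exact hhist T (by linarith) h.ge i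
      · have hcw : ContinuousWithinAt (fun s => (ξ i)⁻¹ * |u i s|) (Set.Ico t₀ T) T := by
          refine ((hvc i) T hTmem).mono ?_
          intro x hx
          simp only [Set.mem_Ici]
          have := hx.1
          linarith
        have hne : (nhdsWithin T (Set.Ico t₀ T)).NeBot := by
          rw [nhdsWithin_Ico_eq_nhdsLT h]
          infer_instance
        refine le_of_tendsto hcw ?_
        filter_upwards [self_mem_nhdsWithin] with s hs
        exact hpre s hs.1 hs.2 i
    have habs : ∀ j s, (ξ j)⁻¹ * |u j s| ≤ M' → |u j s| ≤ ξ j * M' := by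
      intro j s h
      have h2 := mul_le_mul_of_nonneg_left h (hξ j).le
      rwa [← mul_assoc, mul_inv_cancel₀ (hξ j).ne', one_mul] at h2
    have hboundIcc : ∀ s ∈ Set.Icc (T - r) T, ∀ j, |u j s| ≤ ξ j * M' := by
      intro s hs j
      refine habs j s ?_
      rcases le_or_gt s t₀ with h | h
      · exact hhist s (by linarith [hs.1]) h j
      · rcases lt_or_eq_of_le hs.2 with h2 | h2
        · exact hpre s h.le h2 j
        · rw [h2]; exact hatT j
    have hδ : ∀ i, ∃ δ : ℝ, 0 < δ ∧ ∀ s, T < s → s < T + δ →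
        (ξ i)⁻¹ * |u i s| < M' := by
      intro i
      rcases lt_or_eq_of_le (hatT i) with hlt | heq
      · -- continuity case
        have hcw : ContinuousWithinAt (fun s => (ξ i)⁻¹ * |u i s|)
            (Set.Ici (t₀ - r)) T := (hvc i) T hTmem
        have hev : (fun s => (ξ i)⁻¹ * |u i s|) ⁻¹' Set.Iio M' ∈
            nhdsWithin T (Set.Ici (t₀ - r)) := hcw (Iio_mem_nhds hlt)
        rw [Metric.mem_nhdsWithin_iff] at hev
        obtain ⟨δ, hδ0, hδs⟩ := hev
        refine ⟨δ, hδ0, fun s h1 h2 => ?_⟩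
        have hmem : s ∈ Metric.ball T δ ∩ Set.Ici (t₀ - r) := by
          constructor
          · rw [Metric.mem_ball, Real.dist_eq, abs_of_pos (by linarith)]
            linarith
          · simp only [Set.mem_Ici]; linarith
        exact hδs hmem
      · -- Dini derivative case
        have huieq : |u i T| = ξ i * M' := by
          have h2 := congrArg (fun x => ξ i * x) heq
          simpa [← mul_assoc, mul_inv_cancel₀ (hξ i).ne'] using h2
        have hsum : ∑ j, q i j T * sSup ((fun s => |u j s|) '' Set.Icc (T - r) T) ≤
            ∑ j, q i j T * (ξ j * M') := by
          refine Finset.sum_le_sum fun j _ => ?_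
          refine mul_le_mul_of_nonneg_left ?_ (hqpos i j T)
          refine Real.sSup_le ?_ (mul_nonneg (hξ j).le hM'pos.le)
          rintro x ⟨s, hs, rfl⟩
          exact hboundIcc s hs j
        have hDini : diniUpper (fun s => |u i s|) T < 0 := by
          have h1 := hdini i T hTt₀
          have heqsum : ∑ j, q i j T * (ξ j * M') = M' * ∑ j, ξ j * q i j T := by
            rw [Finset.mul_sum]
            exact Finset.sum_congr rfl fun j _ => by ring
          have h2 : -p i T * |u i T| + ∑ j, q i j T *
              sSup ((fun s => |u j s|) '' Set.Icc (T - r) T) ≤ M' * (-η) := by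
            have h3 : -p i T * |u i T| + ∑ j, q i j T *
                sSup ((fun s => |u j s|) '' Set.Icc (T - r) T) ≤
                -p i T * (ξ i * M') + ∑ j, q i j T * (ξ j * M') := by
              rw [huieq]; linarith
            have h4 : -p i T * (ξ i * M') + ∑ j, q i j T * (ξ j * M') =
                M' * (-ξ i * p i T + ∑ j, ξ j * q i j T) := by
              rw [mul_add, heqsum]; ring
            have h5 : M' * (-ξ i * p i T + ∑ j, ξ j * q i j T) ≤ M' * (-η) :=
              mul_le_mul_of_nonneg_left (hdom i T) hM'pos.le
            linarith
          have h6 : M' * (-η) < 0 := by nlinarith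
          linarith
        have hls : diniUpper (fun s => |u i s|) T =
            sInf {a : ℝ | ∀ᶠ h in nhdsWithin (0:ℝ) (Set.Ioi 0),
              (|u i (T + h)| - |u i T|) / h ≤ a} := by
          rw [diniUpper, Filter.limsup_eq]
        have hSne : {a : ℝ | ∀ᶠ h in nhdsWithin (0:ℝ) (Set.Ioi 0),
            (|u i (T + h)| - |u i T|) / h ≤ a}.Nonempty := by
          by_contra hne
          rw [Set.not_nonempty_iff_eq_empty] at hne
          rw [hls, hne, Real.sInf_empty] at hDini
          exact lt_irrefl 0 hDini
        obtain ⟨a, haS, ha0⟩ := exists_lt_of_csInf_lt hSne (hls ▸ hDini)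
        have haS' : {h : ℝ | (|u i (T + h)| - |u i T|) / h ≤ a} ∈
            nhdsWithin (0:ℝ) (Set.Ioi 0) := haS
        rw [Metric.mem_nhdsWithin_iff] at haS'
        obtain ⟨δ, hδ0, hδs⟩ := haS'
        refine ⟨δ, hδ0, fun s h1 h2 => ?_⟩
        have hh : s - T ∈ Metric.ball (0:ℝ) δ ∩ Set.Ioi 0 := by
          constructor
          · rw [Metric.mem_ball, Real.dist_eq, sub_zero, abs_of_pos (by linarith)]
            linarith
          · simp only [Set.mem_Ioi]; linarith
        have hq2 := hδs hh
        simp only [Set.mem_setOf_eq] at hq2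
        have hTs : T + (s - T) = s := by ring
        rw [hTs] at hq2
        have hspos : (0:ℝ) < s - T := by linarith
        rw [div_le_iff₀ hspos] at hq2
        have hlt2 : |u i s| < |u i T| := by nlinarith
        rw [huieq] at hlt2
        have h3 := mul_lt_mul_of_pos_left hlt2 (inv_pos.mpr (hξ i))
        rwa [← mul_assoc, inv_mul_cancel₀ (hξ i).ne', one_mul] at h3
    choose δf hδf0 hδfs using hδ
    have hune : (Finset.univ : Finset (Fin n)).Nonempty := ⟨i₁, Finset.mem_univ _⟩
    set δ : ℝ := Finset.univ.inf' hune δf with hδdef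
    have hδpos : 0 < δ := (Finset.lt_inf'_iff hune).mpr fun i _ => hδf0 i
    obtain ⟨b, hbB, hblt⟩ := exists_lt_of_csInf_lt hBne
      (show sInf B < T + δ by rw [← hTdef]; linarith)
    have hTb : T ≤ b := csInf_le hBbdd hbB
    obtain ⟨hbt₀, j, hj⟩ := hbB
    rcases eq_or_lt_of_le hTb with h | h
    · exact absurd hj (not_lt.mpr (h ▸ hatT j))
    · have hble : b < T + δf j :=
        lt_of_lt_of_le hblt (by linarith [Finset.inf'_le δf (Finset.mem_univ j)])
      exact absurd hj (not_lt.mpr (hδfs j b h hble).le)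
  intro t ht i
  exact le_of_forall_pos_le_add fun ε hε => main ε hε t ht i
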